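/- arXiv:1803.10479 — 3 statements merged into one kernel-verified Lean document; each statement's English description precedes it below -/
import Mathlib

section
/- Let b₀ > 0 and b > 0. For x ≥ 0 and t > 0, ∫_0^∞ ∫_x^∞ e^{b·t} · e^{b₀·l} · ((y+l)/√(2πt³)) · exp(-(y+l)²/(2t)) dy dl = Φ(b₀·√t - x/√t) · exp(b₀²t/2 - b₀·x + b·t), where Φ is the standard normal CDF. -/
open MeasureTheory Real

open Set Filter

/-- The standard normal cumulative distribution function. -/
noncomputable def stdNormalCDF (z : ℝ) : ℝ :=
  ∫ y in Set.Iic z, (2 * π) ^ (-(1 : ℝ) / 2) * Real.exp (-y ^ 2 / 2)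

lemma shift_Ioi (f : ℝ → ℝ) (a c : ℝ) :
    ∫ u in Set.Ioi a, f (u + c) = ∫ u in Set.Ioi (a + c), f u := by
  have h := (measurePreserving_add_right (volume : Measure ℝ) c).setIntegral_preimage_emb
    (MeasurableEquiv.addRight c).measurableEmbedding f (Set.Ioi (a + c))
  rw [← h]
  congr 1
  ext u
  simp [MeasurableEquiv.addRight]

lemma lemA {t : ℝ} (ht : 0 < t) (a : ℝ) :
    ∫ u in Set.Ioi a, u * Real.exp (-u ^ 2 / (2 * t)) = t * Real.exp (-a ^ 2 / (2 * t)) := by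
  have hderiv : ∀ u ∈ Set.Ici a,
      HasDerivAt (fun u : ℝ => -t * Real.exp (-u ^ 2 / (2 * t)))
        (u * Real.exp (-u ^ 2 / (2 * t))) u := by
    intro u _
    have h1 : HasDerivAt (fun u : ℝ => -u ^ 2 / (2 * t)) (-u / t) u := by
      have := ((hasDerivAt_pow 2 u).neg).div_const (2 * t)
      exact this.congr_deriv (by field_simp; ring)
    have h2 := (h1.exp).const_mul (-t)
    exact h2.congr_deriv (by field_simp)
  have hint : IntegrableOn (fun u : ℝ => u * Real.exp (-u ^ 2 / (2 * t))) (Set.Ioi a) := by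
    have : (fun u : ℝ => u * Real.exp (-u ^ 2 / (2 * t)))
        = fun u : ℝ => u * Real.exp (-(1 / (2 * t)) * u ^ 2) := by
      funext u; congr 1; ring_nf
    rw [this]
    exact (integrable_mul_exp_neg_mul_sq (by positivity)).integrableOn
  have htend : Tendsto (fun u : ℝ => -t * Real.exp (-u ^ 2 / (2 * t))) atTop (nhds 0) := by
    have h1 : Tendsto (fun u : ℝ => -u ^ 2 / (2 * t)) atTop atBot := by
      apply Tendsto.atBot_div_const (by positivity)
      exact tendsto_neg_atBot_iff.mpr (tendsto_pow_atTop two_ne_zero)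
    have := (Real.tendsto_exp_atBot.comp h1).const_mul (-t)
    simpa using this
  have := integral_Ioi_of_hasDerivAt_of_tendsto' hderiv hint htend
  rw [this]
  ring

lemma lemB (c : ℝ) :
    ∫ y in Set.Ioi c, (2 * π) ^ (-(1 : ℝ) / 2) * Real.exp (-y ^ 2 / 2)
      = stdNormalCDF (-c) := by
  rw [stdNormalCDF, ← integral_comp_neg_Ioi]
  simp

theorem stmt_3 (b₀ b : ℝ) (hb₀ : 0 < b₀) (hb : 0 < b) (x t : ℝ) (hx : 0 ≤ x) (ht : 0 < t) :
    (∫ l in Set.Ioi (0 : ℝ), ∫ y in Set.Ioi x,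
        Real.exp (b * t) * Real.exp (b₀ * l) *
          ((y + l) / Real.sqrt (2 * π * t ^ 3)) * Real.exp (-(y + l) ^ 2 / (2 * t)))
      = stdNormalCDF (b₀ * Real.sqrt t - x / Real.sqrt t) *
          Real.exp (b₀ ^ 2 * t / 2 - b₀ * x + b * t) := by
  have hst : 0 < Real.sqrt t := Real.sqrt_pos.mpr ht
  have h2pi : (0:ℝ) < 2 * π := by positivity
  -- Step 1: inner integral
  have hinner : ∀ l : ℝ,
      (∫ y in Set.Ioi x, Real.exp (b * t) * Real.exp (b₀ * l) *
          ((y + l) / Real.sqrt (2 * π * t ^ 3)) * Real.exp (-(y + l) ^ 2 / (2 * t)))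
      = (Real.exp (b * t) * t / Real.sqrt (2 * π * t ^ 3) * Real.exp (b₀ ^ 2 * t / 2 - b₀ * x)) *
          Real.exp (-(l + (x - b₀ * t)) ^ 2 / (2 * t)) := by
    intro l
    have hre : ∀ y : ℝ, Real.exp (b * t) * Real.exp (b₀ * l) *
          ((y + l) / Real.sqrt (2 * π * t ^ 3)) * Real.exp (-(y + l) ^ 2 / (2 * t))
        = (Real.exp (b * t) * Real.exp (b₀ * l) / Real.sqrt (2 * π * t ^ 3)) *
            ((fun u : ℝ => u * Real.exp (-u ^ 2 / (2 * t))) (y + l)) := by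
      intro y; simp only; ring
    simp_rw [hre]
    rw [MeasureTheory.integral_const_mul, shift_Ioi (fun u : ℝ => u * Real.exp (-u ^ 2 / (2 * t))) x l,
      lemA ht]
    have hexp : Real.exp (b₀ * l) * Real.exp (-(x + l) ^ 2 / (2 * t))
        = Real.exp (b₀ ^ 2 * t / 2 - b₀ * x) * Real.exp (-(l + (x - b₀ * t)) ^ 2 / (2 * t)) := by
      rw [← Real.exp_add, ← Real.exp_add]
      congr 1
      field_simp
      ring
    linear_combination (Real.exp (b * t) * t / Real.sqrt (2 * π * t ^ 3)) * hexp
  simp_rw [hinner]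
  rw [MeasureTheory.integral_const_mul]
  have hshift := shift_Ioi (fun u : ℝ => Real.exp (-u ^ 2 / (2 * t))) 0 (x - b₀ * t)
  simp only [zero_add] at hshift
  rw [hshift]
  -- Step 2: scaling
  have hscale := integral_comp_mul_left_Ioi (fun u : ℝ => Real.exp (-u ^ 2 / (2 * t)))
    ((x - b₀ * t) / Real.sqrt t) hst
  rw [mul_div_cancel₀ _ hst.ne'] at hscale
  have heq : ∀ v : ℝ, Real.exp (-(Real.sqrt t * v) ^ 2 / (2 * t)) = Real.exp (-v ^ 2 / 2) := by
    intro v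
    congr 1
    rw [mul_pow, Real.sq_sqrt ht.le]
    field_simp
  simp only [heq, smul_eq_mul] at hscale
  have hscale' : (∫ u in Set.Ioi (x - b₀ * t), Real.exp (-u ^ 2 / (2 * t)))
      = Real.sqrt t * ∫ v in Set.Ioi ((x - b₀ * t) / Real.sqrt t), Real.exp (-v ^ 2 / 2) := by
    rw [hscale]
    field_simp
  rw [hscale']
  -- Step 3: identify with stdNormalCDF
  have hB := lemB ((x - b₀ * t) / Real.sqrt t)
  rw [MeasureTheory.integral_const_mul] at hB
  have hneg : -((x - b₀ * t) / Real.sqrt t) = b₀ * Real.sqrt t - x / Real.sqrt t := by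
    have h : Real.sqrt t * Real.sqrt t = t := Real.mul_self_sqrt ht.le
    field_simp
    linear_combination (-b₀) * h
  rw [hneg] at hB
  -- constants
  have hrpow : ((2 * π) ^ (-(1:ℝ)/2) : ℝ) = (Real.sqrt (2 * π))⁻¹ := by
    rw [Real.sqrt_eq_rpow, ← Real.rpow_neg h2pi.le]
    norm_num
  have hsqrt3 : Real.sqrt (2 * π * t ^ 3) = Real.sqrt (2 * π) * (t * Real.sqrt t) := by
    rw [show (2 * π * t ^ 3) = (2 * π) * ((t * t) * t) by ring, Real.sqrt_mul h2pi.le,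
      Real.sqrt_mul (by positivity : (0:ℝ) ≤ t * t) t, Real.sqrt_mul_self ht.le]
  have hs2pi : (0:ℝ) < Real.sqrt (2 * π) := Real.sqrt_pos.mpr h2pi
  set I := ∫ u in Set.Ioi ((x - b₀ * t) / Real.sqrt t), Real.exp (-u ^ 2 / 2) with hI
  rw [← hB, hrpow, hsqrt3, Real.exp_add]
  field_simp
end

section
/- For b₀ > 0 and t > 0, ∫_{ℝ} ∫_0^∞ e^{b₀·l} · ((|y|+l)/√(2πt³)) · exp(-(|y|+l)²/(2t)) dl dy = 2·Φ(b₀·√t)·exp(b₀²·t/2), where Φ is the standard normal CDF. -/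
open MeasureTheory Real

section Aux
open Set Filter Topology

lemma aux_exp_quad {c : ℝ} (hc : 0 < c) (d : ℝ) :
    Integrable fun x : ℝ => Real.exp (d * x - c * x ^ 2) := by
  have h2 := ((integrable_exp_neg_mul_sq hc).comp_sub_right (d / (2 * c))).const_mul
      (Real.exp (d ^ 2 / (4 * c)))
  refine h2.congr (Filter.Eventually.of_forall fun x => ?_)
  show Real.exp _ * Real.exp _ = _
  rw [← Real.exp_add]
  congr 1
  field_simp
  ring

lemma aux_mul_exp_quad {c : ℝ} (hc : 0 < c) (d : ℝ) :
    Integrable fun x : ℝ => x * Real.exp (d * x - c * x ^ 2) := by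
  have hb : Integrable fun x : ℝ =>
      Real.exp ((d + 1) * x - c * x ^ 2) + Real.exp ((d - 1) * x - c * x ^ 2) :=
    (aux_exp_quad hc (d + 1)).add (aux_exp_quad hc (d - 1))
  refine hb.mono' (Continuous.aestronglyMeasurable (by continuity))
      (Filter.Eventually.of_forall fun x => ?_)
  have h1 : |x| ≤ Real.exp |x| := by
    have := Real.add_one_le_exp |x|; linarith [abs_nonneg x]
  calc ‖x * Real.exp (d * x - c * x ^ 2)‖ = |x| * Real.exp (d * x - c * x ^ 2) := by
        rw [norm_mul, Real.norm_eq_abs, Real.norm_eq_abs, abs_of_pos (Real.exp_pos _)]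
    _ ≤ Real.exp |x| * Real.exp (d * x - c * x ^ 2) :=
        mul_le_mul_of_nonneg_right h1 (Real.exp_pos _).le
    _ ≤ Real.exp ((d + 1) * x - c * x ^ 2) + Real.exp ((d - 1) * x - c * x ^ 2) := by
        rw [← Real.exp_add]
        rcases abs_cases x with ⟨h, _⟩ | ⟨h, _⟩ <;> rw [h]
        · calc Real.exp (x + (d * x - c * x ^ 2)) = Real.exp ((d+1) * x - c * x ^ 2) := by ring_nf
            _ ≤ _ := le_add_of_nonneg_right (Real.exp_pos _).le
        · calc Real.exp (-x + (d * x - c * x ^ 2)) = Real.exp ((d-1) * x - c * x ^ 2) := by ring_nf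
            _ ≤ _ := le_add_of_nonneg_left (Real.exp_pos _).le

lemma integral_Ioi_comp_add_right (g : ℝ → ℝ) (a c : ℝ) :
    ∫ x in Ioi a, g (x + c) = ∫ x in Ioi (a + c), g x := by
  rw [← integral_indicator (measurableSet_Ioi (a := a)),
    ← integral_indicator (measurableSet_Ioi (a := a + c)),
    ← integral_add_right_eq_self (fun x => (Ioi (a + c)).indicator g x) c]
  congr 1
  ext x
  by_cases h : x ∈ Ioi a
  · rw [Set.indicator_of_mem h, Set.indicator_of_mem (by simpa using add_lt_add_right h.out c)]
  · rw [Set.indicator_of_notMem h, Set.indicator_of_notMem (by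
      simp only [mem_Ioi, not_lt] at h ⊢; linarith)]

lemma inner_y_val {t : ℝ} (ht : 0 < t) {l : ℝ} (hl : 0 ≤ l) (b₀ : ℝ) :
    (∫ y : ℝ, Real.exp (b₀ * l) * ((|y| + l) / Real.sqrt (2 * π * t ^ 3)) *
        Real.exp (-(|y| + l) ^ 2 / (2 * t)))
      = Real.exp (b₀ * l) * (2 * t / Real.sqrt (2 * π * t ^ 3)) *
          Real.exp (-l ^ 2 / (2 * t)) := by
  rw [integral_comp_abs (f := fun u => Real.exp (b₀ * l) * ((u + l) / Real.sqrt (2 * π * t ^ 3)) *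
    Real.exp (-(u + l) ^ 2 / (2 * t)))]
  have hrw : ∀ y : ℝ, Real.exp (b₀ * l) * ((y + l) / Real.sqrt (2 * π * t ^ 3)) *
      Real.exp (-(y + l) ^ 2 / (2 * t))
      = (Real.exp (b₀ * l) / Real.sqrt (2 * π * t ^ 3)) *
        ((y + l) * Real.exp (-(y + l) ^ 2 / (2 * t))) := fun y => by ring
  simp_rw [hrw]
  rw [MeasureTheory.integral_const_mul]
  have key : (∫ y in Ioi (0:ℝ), (y + l) * Real.exp (-(y + l) ^ 2 / (2 * t)))
      = t * Real.exp (-l ^ 2 / (2 * t)) := by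
    have hderiv : ∀ x ∈ Ici (0:ℝ), HasDerivAt (fun y : ℝ => -t * Real.exp (-(y + l) ^ 2 / (2 * t)))
        ((x + l) * Real.exp (-(x + l) ^ 2 / (2 * t))) x := by
      intro x _
      have h1 : HasDerivAt (fun y : ℝ => -(y + l) ^ 2 / (2 * t)) (-(x + l) / t) x := by
        have := (((hasDerivAt_id x).add_const l).pow 2).neg.div_const (2 * t)
        refine this.congr_deriv ?_
        field_simp
        simp only [id]
        ring
      have h2 := h1.exp.const_mul (-t)
      refine h2.congr_deriv ?_
      field_simp
    have htend : Tendsto (fun y : ℝ => -t * Real.exp (-(y + l) ^ 2 / (2 * t))) atTop (𝓝 0) := by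
      have A : Tendsto (fun y : ℝ => y + l) atTop atTop :=
        tendsto_atTop_add_const_right _ l tendsto_id
      have B : Tendsto (fun z : ℝ => z ^ 2) atTop atTop := tendsto_pow_atTop two_ne_zero
      have C : Tendsto (fun y : ℝ => -(y + l) ^ 2 / (2 * t)) atTop atBot := by
        apply Tendsto.atBot_div_const (by positivity)
        simpa using (tendsto_neg_atBot_iff.mpr (B.comp A))
      have D := (Real.tendsto_exp_atBot.comp C).const_mul (-t)
      simpa using D
    have := integral_Ioi_of_hasDerivAt_of_nonneg' hderiv
      (fun x hx => mul_nonneg (by have := hx.out; linarith) (Real.exp_pos _).le) htend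
    rw [this]
    simp
  rw [key]
  ring

lemma inner_y_int {t : ℝ} (ht : 0 < t) {l : ℝ} (hl : 0 ≤ l) (b₀ : ℝ) :
    Integrable (fun y : ℝ => Real.exp (b₀ * l) * ((|y| + l) / Real.sqrt (2 * π * t ^ 3)) *
        Real.exp (-(|y| + l) ^ 2 / (2 * t))) := by
  set C := Real.sqrt (2 * π * t ^ 3) with hC
  have hc : (0:ℝ) < (2 * t)⁻¹ := by positivity
  have hbound : Integrable (fun y : ℝ =>
      (Real.exp (b₀ * l) * Real.exp (-l ^ 2 / (2 * t)) / C) *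
        (l * Real.exp (0 * y - (2 * t)⁻¹ * y ^ 2) + |y * Real.exp (0 * y - (2 * t)⁻¹ * y ^ 2)|)) :=
    (((aux_exp_quad hc 0).const_mul l).add (aux_mul_exp_quad hc 0).abs).const_mul _
  refine hbound.mono' (Continuous.aestronglyMeasurable (by continuity))
    (Filter.Eventually.of_forall fun y => ?_)
  have hE : Real.exp (0 * y - (2 * t)⁻¹ * y ^ 2) = Real.exp (-y ^ 2 / (2 * t)) := by
    congr 1
    field_simp
    ring
  rw [hE, abs_mul, abs_of_pos (Real.exp_pos _)]
  have hnn : 0 ≤ Real.exp (b₀ * l) * ((|y| + l) / C) * Real.exp (-(|y| + l) ^ 2 / (2 * t)) := by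
    have h0 : (0:ℝ) ≤ C := Real.sqrt_nonneg _
    positivity
  rw [Real.norm_eq_abs, abs_of_nonneg hnn]
  have claim : Real.exp (-(|y| + l) ^ 2 / (2 * t)) ≤
      Real.exp (-l ^ 2 / (2 * t)) * Real.exp (-y ^ 2 / (2 * t)) := by
    rw [← Real.exp_add]
    apply Real.exp_le_exp.mpr
    have h2t : (0:ℝ) < 2 * t := by positivity
    rw [← add_div, div_le_div_iff₀ h2t h2t]
    nlinarith [mul_nonneg (mul_nonneg (abs_nonneg y) hl) h2t.le, sq_abs y]
  calc Real.exp (b₀ * l) * ((|y| + l) / C) * Real.exp (-(|y| + l) ^ 2 / (2 * t))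
      ≤ Real.exp (b₀ * l) * ((|y| + l) / C) *
        (Real.exp (-l ^ 2 / (2 * t)) * Real.exp (-y ^ 2 / (2 * t))) := by
        apply mul_le_mul_of_nonneg_left claim
        have h0 : (0:ℝ) ≤ C := Real.sqrt_nonneg _
        positivity
    _ = (Real.exp (b₀ * l) * Real.exp (-l ^ 2 / (2 * t)) / C) *
        (l * Real.exp (-y ^ 2 / (2 * t)) + |y| * Real.exp (-y ^ 2 / (2 * t))) := by ring



lemma outer_val {b₀ t : ℝ} (hb₀ : 0 < b₀) (ht : 0 < t) :
    (∫ l in Ioi (0:ℝ), Real.exp (b₀ * l) * (2 * t / Real.sqrt (2 * π * t ^ 3)) *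
        Real.exp (-l ^ 2 / (2 * t)))
      = 2 * stdNormalCDF (b₀ * Real.sqrt t) * Real.exp (b₀ ^ 2 * t / 2) := by
  set C := Real.sqrt (2 * π * t ^ 3) with hC
  have hexp : ∀ l : ℝ, Real.exp (b₀ * l) * (2 * t / C) * Real.exp (-l ^ 2 / (2 * t))
      = ((2 * t / C) * Real.exp (b₀ ^ 2 * t / 2)) * Real.exp (-(l + -(b₀ * t)) ^ 2 / (2 * t)) := by
    intro l
    have h : Real.exp (b₀ * l) * Real.exp (-l ^ 2 / (2 * t))
        = Real.exp (b₀ ^ 2 * t / 2) * Real.exp (-(l + -(b₀ * t)) ^ 2 / (2 * t)) := by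
      rw [← Real.exp_add, ← Real.exp_add]
      congr 1
      field_simp
      ring
    calc Real.exp (b₀ * l) * (2 * t / C) * Real.exp (-l ^ 2 / (2 * t))
        = (2 * t / C) * (Real.exp (b₀ * l) * Real.exp (-l ^ 2 / (2 * t))) := by ring
      _ = _ := by rw [h]; ring
  simp_rw [hexp]
  rw [MeasureTheory.integral_const_mul]
  rw [integral_Ioi_comp_add_right (fun u => Real.exp (-u ^ 2 / (2 * t))) 0 (-(b₀ * t)), zero_add]
  have hst : (0:ℝ) < Real.sqrt t := Real.sqrt_pos.mpr ht
  have htt : Real.sqrt t * Real.sqrt t = t := Real.mul_self_sqrt ht.le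
  have hscale : (∫ x in Ioi (-(b₀ * t)), Real.exp (-x ^ 2 / (2 * t)))
      = Real.sqrt t * ∫ v in Ioi (-(b₀ * Real.sqrt t)), Real.exp (-v ^ 2 / 2) := by
    have h1 : ∀ x : ℝ, Real.exp (-x ^ 2 / (2 * t))
        = (fun v => Real.exp (-v ^ 2 / 2)) ((Real.sqrt t)⁻¹ * x) := by
      intro x
      simp only []
      congr 1
      rw [mul_pow, inv_pow, Real.sq_sqrt ht.le]
      field_simp
    simp_rw [h1]
    rw [integral_comp_mul_left_Ioi (fun v => Real.exp (-v ^ 2 / 2)) _ (inv_pos.mpr hst)]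
    have h2 : (Real.sqrt t)⁻¹ * -(b₀ * t) = -(b₀ * Real.sqrt t) := by
      field_simp
      nlinarith [htt]
    rw [h2, inv_inv, smul_eq_mul]
  rw [hscale]
  have hneg : (∫ v in Ioi (-(b₀ * Real.sqrt t)), Real.exp (-v ^ 2 / 2))
      = ∫ v in Iic (b₀ * Real.sqrt t), Real.exp (-v ^ 2 / 2) := by
    rw [← integral_comp_neg_Iic (b₀ * Real.sqrt t) (fun v => Real.exp (-v ^ 2 / 2))]
    apply setIntegral_congr_fun measurableSet_Iic
    intro x _
    simp [neg_sq]
  rw [hneg]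
  have hcdf : stdNormalCDF (b₀ * Real.sqrt t)
      = (2 * π) ^ (-(1 : ℝ) / 2) * ∫ v in Iic (b₀ * Real.sqrt t), Real.exp (-v ^ 2 / 2) := by
    rw [stdNormalCDF, MeasureTheory.integral_const_mul]
  rw [hcdf]
  have hCval : C = Real.sqrt (2 * π) * (t * Real.sqrt t) := by
    rw [hC, show (2 * π * t ^ 3) = (2 * π) * (t * Real.sqrt t) ^ 2 by
        rw [mul_pow, Real.sq_sqrt ht.le]; ring,
      Real.sqrt_mul (by positivity), Real.sqrt_sq (by positivity)]
  have hpow : (2 * π) ^ (-(1 : ℝ) / 2) = (Real.sqrt (2 * π))⁻¹ := by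
    rw [show (-(1:ℝ) / 2) = -(1 / 2 : ℝ) by norm_num, Real.rpow_neg (by positivity),
      ← Real.sqrt_eq_rpow]
  rw [hpow, hCval]
  have h2pi : (0:ℝ) < Real.sqrt (2 * π) := Real.sqrt_pos.mpr (by positivity)
  field_simp

end Aux

open Set in
theorem stmt_4 (b₀ t : ℝ) (hb₀ : 0 < b₀) (ht : 0 < t) :
    (∫ y : ℝ, ∫ l in Set.Ioi (0 : ℝ),
        Real.exp (b₀ * l) * ((|y| + l) / Real.sqrt (2 * π * t ^ 3)) *
          Real.exp (-(|y| + l) ^ 2 / (2 * t)))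
      = 2 * stdNormalCDF (b₀ * Real.sqrt t) * Real.exp (b₀ ^ 2 * t / 2) := by
  have hc : (0:ℝ) < (2 * t)⁻¹ := by positivity
  have hCpos : (0:ℝ) < Real.sqrt (2 * π * t ^ 3) := Real.sqrt_pos.mpr (by positivity)
  set f : ℝ → ℝ → ℝ := fun y l => Real.exp (b₀ * l) *
    ((|y| + l) / Real.sqrt (2 * π * t ^ 3)) * Real.exp (-(|y| + l) ^ 2 / (2 * t)) with hf
  set μ := volume.restrict (Ioi (0:ℝ)) with hμ
  have hcont : Continuous (Function.uncurry f) := by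
    apply Continuous.mul
    apply Continuous.mul
    · exact Real.continuous_exp.comp (continuous_const.mul continuous_snd)
    · exact (continuous_fst.abs.add continuous_snd).div_const _
    · exact Real.continuous_exp.comp
        (((continuous_fst.abs.add continuous_snd).pow 2).neg.div_const (2 * t))
  have hnn : ∀ y : ℝ, ∀ l ∈ Ioi (0:ℝ), 0 ≤ f y l := by
    intro y l hl
    have h1 : (0:ℝ) ≤ |y| + l := add_nonneg (abs_nonneg y) hl.out.le
    exact mul_nonneg (mul_nonneg (Real.exp_pos _).le (div_nonneg h1 hCpos.le))
      (Real.exp_pos _).le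
  have hsec : ∀ y : ℝ, Integrable (f y) μ := by
    intro y
    have key : Integrable (fun l : ℝ => (Real.exp (-|y| ^ 2 / (2 * t)) / Real.sqrt (2 * π * t ^ 3)) *
        (|y| * Real.exp ((b₀ - |y| / t) * l - (2 * t)⁻¹ * l ^ 2) +
          l * Real.exp ((b₀ - |y| / t) * l - (2 * t)⁻¹ * l ^ 2))) :=
      (((aux_exp_quad hc _).const_mul |y|).add (aux_mul_exp_quad hc _)).const_mul _
    refine (key.congr (Filter.Eventually.of_forall fun l => ?_)).restrict
    have hx : Real.exp (b₀ * l) * Real.exp (-(|y| + l) ^ 2 / (2 * t))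
        = Real.exp (-|y| ^ 2 / (2 * t)) * Real.exp ((b₀ - |y| / t) * l - (2 * t)⁻¹ * l ^ 2) := by
      rw [← Real.exp_add, ← Real.exp_add]
      congr 1
      field_simp
      ring
    show _ = Real.exp (b₀ * l) * ((|y| + l) / Real.sqrt (2 * π * t ^ 3)) *
        Real.exp (-(|y| + l) ^ 2 / (2 * t))
    calc (Real.exp (-|y| ^ 2 / (2 * t)) / Real.sqrt (2 * π * t ^ 3)) *
        (|y| * Real.exp ((b₀ - |y| / t) * l - (2 * t)⁻¹ * l ^ 2) +
          l * Real.exp ((b₀ - |y| / t) * l - (2 * t)⁻¹ * l ^ 2))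
        = ((|y| + l) / Real.sqrt (2 * π * t ^ 3)) *
          (Real.exp (-|y| ^ 2 / (2 * t)) * Real.exp ((b₀ - |y| / t) * l - (2 * t)⁻¹ * l ^ 2)) := by
          ring
      _ = ((|y| + l) / Real.sqrt (2 * π * t ^ 3)) *
          (Real.exp (b₀ * l) * Real.exp (-(|y| + l) ^ 2 / (2 * t))) := by rw [← hx]
      _ = _ := by ring
  have hG : Integrable (fun l : ℝ => Real.exp (b₀ * l) * (2 * t / Real.sqrt (2 * π * t ^ 3)) *
      Real.exp (-l ^ 2 / (2 * t))) μ := by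
    have key := (aux_exp_quad hc b₀).const_mul (2 * t / Real.sqrt (2 * π * t ^ 3))
    refine (key.congr (Filter.Eventually.of_forall fun l => ?_)).restrict
    show 2 * t / Real.sqrt (2 * π * t ^ 3) * Real.exp (b₀ * l - (2 * t)⁻¹ * l ^ 2) = _
    rw [show b₀ * l - (2 * t)⁻¹ * l ^ 2 = b₀ * l + -l ^ 2 / (2 * t) by field_simp; ring,
      Real.exp_add]
    ring
  have h0 : (∫ y : ℝ, ∫ l in Set.Ioi (0:ℝ), Real.exp (b₀ * l) *
      ((|y| + l) / Real.sqrt (2 * π * t ^ 3)) * Real.exp (-(|y| + l) ^ 2 / (2 * t)))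
      = ∫ y : ℝ, ∫ l, f y l ∂μ := rfl
  rw [h0]
  have hF_meas : AEStronglyMeasurable (fun y => ∫ l, f y l ∂μ) volume :=
    (hcont.stronglyMeasurable.integral_prod_right').aestronglyMeasurable
  rw [integral_eq_lintegral_of_nonneg_ae (Filter.Eventually.of_forall fun y =>
    integral_nonneg_of_ae ((ae_restrict_iff' measurableSet_Ioi).mpr
      (Filter.Eventually.of_forall (hnn y)))) hF_meas]
  have h1 : ∀ y : ℝ, ENNReal.ofReal (∫ l, f y l ∂μ) = ∫⁻ l, ENNReal.ofReal (f y l) ∂μ := fun y =>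
    ofReal_integral_eq_lintegral_ofReal (hsec y) ((ae_restrict_iff' measurableSet_Ioi).mpr
      (Filter.Eventually.of_forall (hnn y)))
  simp_rw [← hμ, h1]
  have hswap : AEMeasurable (Function.uncurry fun y l => ENNReal.ofReal (f y l))
      ((volume : Measure ℝ).prod μ) :=
    (ENNReal.measurable_ofReal.comp hcont.measurable).aemeasurable
  rw [lintegral_lintegral_swap hswap]
  have h2 : ∀ᵐ l ∂μ, (∫⁻ y, ENNReal.ofReal (f y l))
      = ENNReal.ofReal (Real.exp (b₀ * l) * (2 * t / Real.sqrt (2 * π * t ^ 3)) *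
        Real.exp (-l ^ 2 / (2 * t))) := by
    filter_upwards [ae_restrict_mem measurableSet_Ioi] with l hl
    rw [← ofReal_integral_eq_lintegral_ofReal (inner_y_int ht hl.out.le b₀)
      (Filter.Eventually.of_forall fun y => hnn y l hl)]
    congr 1
    exact inner_y_val ht hl.out.le b₀
  rw [lintegral_congr_ae h2]
  rw [← ofReal_integral_eq_lintegral_ofReal hG ((ae_restrict_iff' measurableSet_Ioi).mpr
    (Filter.Eventually.of_forall fun l hl => by positivity))]
  rw [ENNReal.toReal_ofReal (integral_nonneg fun l => by positivity)]
  exact outer_val hb₀ ht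
end

section
/- Let b₀ > 0, b > 0, λ ≥ 0, and define f(t) = Φ((b₀ - λ)√t) · exp((b₀²/2 - b₀λ + b)·t), where Φ is the standard normal CDF. Then (1/t)·log f(t) → Δ_λ as t → ∞, where Δ_λ = b₀²/2 - b₀λ + b if λ ≤ b₀, and Δ_λ = -λ²/2 + b if λ ≥ b₀. -/
open MeasureTheory Real Filter

namespace Stmt5Aux

noncomputable def C : ℝ := (2 * π) ^ (-(1 : ℝ) / 2)

lemma C_pos : 0 < C := Real.rpow_pos_of_pos (by positivity) _

lemma gauss_integrable : Integrable (fun y : ℝ => C * Real.exp (-y ^ 2 / 2)) := by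
  have h := integrable_exp_neg_mul_sq (by norm_num : (0:ℝ) < 1/2)
  have h' : Integrable (fun y : ℝ => Real.exp (-y ^ 2 / 2)) := by
    convert h using 2 with y
    ring_nf
  exact h'.const_mul _

lemma gauss_nonneg (y : ℝ) : 0 ≤ C * Real.exp (-y ^ 2 / 2) :=
  mul_nonneg C_pos.le (Real.exp_pos _).le

lemma cdf_mono : Monotone stdNormalCDF := by
  intro a b hab
  exact setIntegral_mono_set gauss_integrable.integrableOn
    (Filter.Eventually.of_forall fun y => gauss_nonneg y)
    (HasSubset.Subset.eventuallyLE (Set.Iic_subset_Iic.2 hab))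

lemma cdf_le_one (z : ℝ) : stdNormalCDF z ≤ 1 := by
  have h1 : stdNormalCDF z ≤ ∫ y : ℝ, C * Real.exp (-y ^ 2 / 2) :=
    setIntegral_le_integral gauss_integrable
      (Filter.Eventually.of_forall fun y => gauss_nonneg y)
  have h2 : ∫ y : ℝ, C * Real.exp (-y ^ 2 / 2) = 1 := by
    rw [integral_const_mul]
    have : (fun y : ℝ => Real.exp (-y ^ 2 / 2)) = fun y : ℝ => Real.exp (-(1/2) * y ^ 2) := by
      funext y; ring_nf
    rw [this, integral_gaussian]
    rw [show π / (1/2 : ℝ) = 2 * π by ring]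
    rw [Real.sqrt_eq_rpow, C, ← Real.rpow_add (by positivity)]
    norm_num
  linarith

lemma cdf_lower (x : ℝ) (hx : 0 ≤ x) :
    C * Real.exp (-(x + 1) ^ 2 / 2) ≤ stdNormalCDF (-x) := by
  have hsub : Set.Ioc (-x - 1) (-x) ⊆ Set.Iic (-x) := Set.Ioc_subset_Iic_self
  have h1 : ∫ y in Set.Ioc (-x - 1) (-x), C * Real.exp (-y ^ 2 / 2) ≤ stdNormalCDF (-x) :=
    setIntegral_mono_set gauss_integrable.integrableOn
      (Filter.Eventually.of_forall fun y => gauss_nonneg y)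
      (HasSubset.Subset.eventuallyLE hsub)
  have h2 : C * Real.exp (-(x + 1) ^ 2 / 2)
      ≤ ∫ y in Set.Ioc (-x - 1) (-x), C * Real.exp (-y ^ 2 / 2) := by
    have hmono : ∀ y ∈ Set.Ioc (-x - 1) (-x),
        C * Real.exp (-(x + 1) ^ 2 / 2) ≤ C * Real.exp (-y ^ 2 / 2) := by
      intro y hy
      apply mul_le_mul_of_nonneg_left _ C_pos.le
      apply Real.exp_le_exp.2
      have h1 : -(x + 1) < y := by linarith [hy.1]
      have h2 : y ≤ -x := hy.2
      nlinarith
    have := setIntegral_mono_on (integrableOn_const (by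
        rw [Real.volume_Ioc]; exact ENNReal.ofReal_ne_top))
      (gauss_integrable.integrableOn) measurableSet_Ioc hmono
    rw [setIntegral_const, Real.volume_real_Ioc] at this
    have hmeas : (-x) - (-x - 1) = 1 := by ring
    rw [hmeas] at this
    simpa using this
  linarith

lemma cdf_pos (z : ℝ) : 0 < stdNormalCDF z := by
  rcases le_or_gt 0 z with h | h
  · calc 0 < C * Real.exp (-(0 + 1) ^ 2 / 2) := mul_pos C_pos (Real.exp_pos _)
      _ ≤ stdNormalCDF (-0) := cdf_lower 0 le_rfl
      _ ≤ stdNormalCDF z := cdf_mono (by simpa using h)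
  · have : z = -(-z) := by ring
    rw [this]
    calc 0 < C * Real.exp (-(-z + 1) ^ 2 / 2) := mul_pos C_pos (Real.exp_pos _)
      _ ≤ stdNormalCDF (-(-z)) := cdf_lower (-z) (by linarith)

lemma cdf_upper (x : ℝ) (hx : 1 ≤ x) :
    stdNormalCDF (-x) ≤ C * Real.exp (-x ^ 2 / 2) := by
  have key : ∀ y ∈ Set.Iic (-x),
      C * Real.exp (-y ^ 2 / 2) ≤ (C * Real.exp (-x ^ 2 / 2 + x)) * Real.exp y := by
    intro y hy
    simp only [Set.mem_Iic] at hy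
    rw [mul_assoc, ← Real.exp_add]
    apply mul_le_mul_of_nonneg_left _ C_pos.le
    apply Real.exp_le_exp.2
    nlinarith [mul_nonneg (by linarith : (0:ℝ) ≤ -(y + x)) (by linarith : (0:ℝ) ≤ -(y - x) / 2 - 1)]
  have hint : IntegrableOn (fun y : ℝ => (C * Real.exp (-x ^ 2 / 2 + x)) * Real.exp y)
      (Set.Iic (-x)) := (integrableOn_exp_Iic (-x)).const_mul _
  have h1 : stdNormalCDF (-x)
      ≤ ∫ y in Set.Iic (-x), (C * Real.exp (-x ^ 2 / 2 + x)) * Real.exp y :=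
    setIntegral_mono_on gauss_integrable.integrableOn hint measurableSet_Iic key
  have h2 : ∫ y in Set.Iic (-x), (C * Real.exp (-x ^ 2 / 2 + x)) * Real.exp y
      = C * Real.exp (-x ^ 2 / 2) := by
    rw [integral_const_mul, integral_exp_Iic, mul_assoc, ← Real.exp_add]
    congr 1
    ring
  linarith

lemma sqrt_tendsto : Tendsto Real.sqrt atTop atTop := by
  apply tendsto_atTop_atTop.2
  intro M
  refine ⟨max 0 M ^ 2, fun a ha => ?_⟩
  calc M ≤ max 0 M := le_max_right _ _
    _ ≤ Real.sqrt (max 0 M ^ 2) := by rw [Real.sqrt_sq (le_max_left _ _)]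
    _ ≤ Real.sqrt a := Real.sqrt_le_sqrt ha

end Stmt5Aux

open Stmt5Aux in
theorem stmt_5 (b₀ b lam : ℝ) (hb₀ : 0 < b₀) (hb : 0 < b) (hlam : 0 ≤ lam) :
    Tendsto
      (fun t : ℝ => (1 / t) *
        Real.log (stdNormalCDF ((b₀ - lam) * Real.sqrt t) *
          Real.exp ((b₀ ^ 2 / 2 - b₀ * lam + b) * t)))
      atTop
      (nhds (if lam ≤ b₀ then b₀ ^ 2 / 2 - b₀ * lam + b else -lam ^ 2 / 2 + b)) := by
  set a : ℝ := b₀ ^ 2 / 2 - b₀ * lam + b with ha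
  -- reduce to the limit of (1/t) * log (cdf ((b₀-lam)√t))
  have key : ∀ L : ℝ,
      Tendsto (fun t : ℝ => (1 / t) * Real.log (stdNormalCDF ((b₀ - lam) * Real.sqrt t)))
        atTop (nhds L) →
      Tendsto (fun t : ℝ => (1 / t) *
        Real.log (stdNormalCDF ((b₀ - lam) * Real.sqrt t) * Real.exp (a * t)))
        atTop (nhds (L + a)) := by
    intro L hL
    have heq : ∀ᶠ t : ℝ in atTop,
        (1 / t) * Real.log (stdNormalCDF ((b₀ - lam) * Real.sqrt t) * Real.exp (a * t))
        = (1 / t) * Real.log (stdNormalCDF ((b₀ - lam) * Real.sqrt t)) + a := by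
      filter_upwards [eventually_gt_atTop 0] with t ht
      rw [Real.log_mul (cdf_pos _).ne' (Real.exp_pos _).ne', Real.log_exp]
      field_simp
    exact ((hL.add tendsto_const_nhds).congr' (Filter.EventuallyEq.symm heq))
  by_cases h : lam ≤ b₀
  · rw [if_pos h]
    have h0 : Tendsto (fun t : ℝ => (1 / t) * Real.log (stdNormalCDF ((b₀ - lam) * Real.sqrt t)))
        atTop (nhds 0) := by
      apply tendsto_of_tendsto_of_tendsto_of_le_of_le'
        (g := fun t : ℝ => (1 / t) * Real.log (stdNormalCDF 0)) (h := fun _ : ℝ => (0:ℝ))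
      · simpa using (tendsto_inv_atTop_zero (𝕜 := ℝ)).mul_const (Real.log (stdNormalCDF 0))
      · exact tendsto_const_nhds
      · filter_upwards [eventually_gt_atTop 0] with t ht
        apply mul_le_mul_of_nonneg_left _ (by positivity)
        apply Real.log_le_log (cdf_pos 0)
        apply cdf_mono
        exact mul_nonneg (by linarith) (Real.sqrt_nonneg t)
      · filter_upwards [eventually_gt_atTop 0] with t ht
        apply mul_nonpos_of_nonneg_of_nonpos (by positivity)
        exact Real.log_nonpos (cdf_pos _).le (cdf_le_one _)
    simpa using key 0 h0
  · rw [if_neg h]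
    push_neg at h
    set k : ℝ := lam - b₀ with hk
    have hkpos : 0 < k := by simp [hk]; linarith
    have harg : ∀ t : ℝ, (b₀ - lam) * Real.sqrt t = -(k * Real.sqrt t) := by
      intro t; simp [hk]; ring
    have hL : Tendsto (fun t : ℝ => (1 / t) * Real.log (stdNormalCDF ((b₀ - lam) * Real.sqrt t)))
        atTop (nhds (-(k ^ 2 / 2))) := by
      have hx : Tendsto (fun t : ℝ => k * Real.sqrt t) atTop atTop :=
        sqrt_tendsto.const_mul_atTop hkpos
      apply tendsto_of_tendsto_of_tendsto_of_le_of_le'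
        (g := fun t : ℝ => (1 / t) * Real.log C - (k + (Real.sqrt t)⁻¹) ^ 2 / 2)
        (h := fun t : ℝ => (1 / t) * Real.log C - k ^ 2 / 2)
      · -- lower bound tendsto
        have h1 : Tendsto (fun t : ℝ => (1 / t) * Real.log C) atTop (nhds 0) := by
          simpa using (tendsto_inv_atTop_zero (𝕜 := ℝ)).mul_const (Real.log C)
        have h2 : Tendsto (fun t : ℝ => (k + (Real.sqrt t)⁻¹) ^ 2 / 2) atTop
            (nhds (k ^ 2 / 2)) := by
          have : Tendsto (fun t : ℝ => k + (Real.sqrt t)⁻¹) atTop (nhds k) := by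
            simpa using (tendsto_const_nhds (x := k)).add sqrt_tendsto.inv_tendsto_atTop
          simpa using ((this.pow 2).div_const 2)
        simpa using h1.sub h2
      · have h1 : Tendsto (fun t : ℝ => (1 / t) * Real.log C) atTop (nhds 0) := by
          simpa using (tendsto_inv_atTop_zero (𝕜 := ℝ)).mul_const (Real.log C)
        simpa using h1.sub (tendsto_const_nhds (x := k ^ 2 / 2))
      · -- lower inequality
        filter_upwards [eventually_gt_atTop 0, eventually_ge_atTop 1] with t ht ht1
        have hst : 0 < Real.sqrt t := Real.sqrt_pos.2 ht
        have hss : Real.sqrt t * Real.sqrt t = t := Real.mul_self_sqrt ht.le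
        rw [harg t]
        have hlow := cdf_lower (k * Real.sqrt t) (mul_nonneg hkpos.le (Real.sqrt_nonneg t))
        have hlog : Real.log C + (-(k * Real.sqrt t + 1) ^ 2 / 2)
            ≤ Real.log (stdNormalCDF (-(k * Real.sqrt t))) := by
          have := Real.log_le_log (mul_pos C_pos (Real.exp_pos _)) hlow
          rwa [Real.log_mul C_pos.ne' (Real.exp_pos _).ne', Real.log_exp] at this
        have hmul : (1 / t) * (Real.log C + (-(k * Real.sqrt t + 1) ^ 2 / 2))
            ≤ (1 / t) * Real.log (stdNormalCDF (-(k * Real.sqrt t))) :=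
          mul_le_mul_of_nonneg_left hlog (by positivity)
        refine le_trans (le_of_eq ?_) hmul
        have hexp : (k + (Real.sqrt t)⁻¹) ^ 2 = (k * Real.sqrt t + 1) ^ 2 / t := by
          field_simp
          exact (Real.sq_sqrt ht.le).symm
        rw [hexp]
        field_simp
        ring
      · -- upper inequality
        filter_upwards [eventually_gt_atTop 0, hx.eventually_ge_atTop 1] with t ht hx1
        have hss : Real.sqrt t * Real.sqrt t = t := Real.mul_self_sqrt ht.le
        rw [harg t]
        have hupp := cdf_upper (k * Real.sqrt t) hx1
        have hlog : Real.log (stdNormalCDF (-(k * Real.sqrt t)))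
            ≤ Real.log C + (-(k * Real.sqrt t) ^ 2 / 2) := by
          have := Real.log_le_log (cdf_pos _) hupp
          rwa [Real.log_mul C_pos.ne' (Real.exp_pos _).ne', Real.log_exp] at this
        have hmul : (1 / t) * Real.log (stdNormalCDF (-(k * Real.sqrt t)))
            ≤ (1 / t) * (Real.log C + (-(k * Real.sqrt t) ^ 2 / 2)) :=
          mul_le_mul_of_nonneg_left hlog (by positivity)
        refine le_trans hmul (le_of_eq ?_)
        have hsq : (k * Real.sqrt t) ^ 2 = k ^ 2 * t := by
          rw [mul_pow, Real.sq_sqrt ht.le]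
        rw [hsq]
        field_simp
        ring
    have := key (-(k ^ 2 / 2)) hL
    have hval : -(k ^ 2 / 2) + a = -lam ^ 2 / 2 + b := by
      simp only [hk, ha]; ring
    rwa [hval] at this
end
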